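/- Let m ∈ ℕ. Then for all x ∈ ℝ, the m-th derivative of the hyperbolic tangent satisfies |tanh^{(m)}(x)| ≤ (2m)^{m+1} · min{exp(−2x), exp(2x)}. -/

import Mathlib

open Polynomial Finset

noncomputable def tanhPoly : ℕ → Polynomial ℝ
  | 0 => X
  | (m+1) => (1 - X ^ 2) * (tanhPoly m).derivative

lemma hasDerivAt_tanh' (x : ℝ) : HasDerivAt Real.tanh (1 - Real.tanh x ^ 2) x := by
  have hc := Real.cosh_pos x
  have h := (Real.hasDerivAt_sinh x).div (Real.hasDerivAt_cosh x) hc.ne'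
  have heq : Real.tanh = fun y => Real.sinh y / Real.cosh y := by
    funext y; exact Real.tanh_eq_sinh_div_cosh y
  rw [heq]
  refine h.congr_deriv ?_
  have hid := Real.cosh_sq_sub_sinh_sq x
  field_simp

lemma iteratedDeriv_tanh_eq (m : ℕ) :
    iteratedDeriv m Real.tanh = fun x => (tanhPoly m).eval (Real.tanh x) := by
  induction m with
  | zero => simp [tanhPoly]
  | succ m ih =>
    funext x
    rw [iteratedDeriv_succ, ih]
    have h : HasDerivAt (fun x => (tanhPoly m).eval (Real.tanh x))
        (((tanhPoly m).derivative.eval (Real.tanh x)) * (1 - Real.tanh x ^ 2)) x :=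
      (Polynomial.hasDerivAt (tanhPoly m) (Real.tanh x)).comp x (hasDerivAt_tanh' x)
    rw [h.deriv]
    show _ = ((1 - X ^ 2) * (tanhPoly m).derivative).eval (Real.tanh x)
    simp [Polynomial.eval_mul]
    ring

noncomputable def coeffSum (p : Polynomial ℝ) (n : ℕ) : ℝ :=
  ∑ i ∈ Finset.range n, |p.coeff i|

lemma coeffSum_nonneg (p : Polynomial ℝ) (n : ℕ) : 0 ≤ coeffSum p n :=
  Finset.sum_nonneg fun _ _ => abs_nonneg _

lemma abs_eval_le (p : Polynomial ℝ) (n : ℕ) (hn : p.natDegree < n) {t : ℝ} (ht : |t| ≤ 1) :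
    |p.eval t| ≤ coeffSum p n := by
  rw [Polynomial.eval_eq_sum_range' hn]
  refine (Finset.abs_sum_le_sum_abs _ _).trans (Finset.sum_le_sum fun i _ => ?_)
  rw [abs_mul]
  calc |p.coeff i| * |t ^ i| ≤ |p.coeff i| * 1 := by
        refine mul_le_mul_of_nonneg_left ?_ (abs_nonneg _)
        rw [abs_pow]; exact pow_le_one₀ (abs_nonneg _) ht
    _ = |p.coeff i| := mul_one _

lemma coeffSum_pad (p : Polynomial ℝ) {n n' : ℕ} (hd : p.natDegree < n) (h : n ≤ n') :
    coeffSum p n' = coeffSum p n := by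
  unfold coeffSum
  rw [← Finset.sum_subset (Finset.range_subset_range.2 h)]
  intro i hi hni
  have : p.natDegree < i := lt_of_lt_of_le hd (le_of_not_gt fun hc => hni (Finset.mem_range.2 hc))
  rw [Polynomial.coeff_eq_zero_of_natDegree_lt this, abs_zero]

lemma coeffSum_sub (p q : Polynomial ℝ) (n : ℕ) :
    coeffSum (p - q) n ≤ coeffSum p n + coeffSum q n := by
  unfold coeffSum
  rw [← Finset.sum_add_distrib]
  exact Finset.sum_le_sum fun i _ => by simpa using abs_sub (p.coeff i) (q.coeff i)

lemma coeffSum_X_sq_mul (p : Polynomial ℝ) (n : ℕ) :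
    coeffSum (X ^ 2 * p) (n + 2) = coeffSum p n := by
  unfold coeffSum
  rw [Finset.sum_range_succ', Finset.sum_range_succ']
  have h0 : ∀ i < 2, (X ^ 2 * p).coeff i = 0 := by
    intro i hi
    rw [mul_comm, Polynomial.coeff_mul_X_pow']
    simp [Nat.not_le_of_lt hi]
  have h2 : ∀ i, (X ^ 2 * p).coeff (i + 2) = p.coeff i := fun i => by
    rw [mul_comm, Polynomial.coeff_mul_X_pow']
    simp
  simp [h0 0 (by norm_num), h0 1 (by norm_num), h2]

lemma coeffSum_derivative (p : Polynomial ℝ) (n : ℕ) :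
    coeffSum (derivative p) n ≤ n * coeffSum p (n + 1) := by
  unfold coeffSum
  have step1 : ∑ i ∈ Finset.range n, |(derivative p).coeff i|
      ≤ ∑ i ∈ Finset.range n, (n : ℝ) * |p.coeff (i + 1)| := by
    refine Finset.sum_le_sum fun i hi => ?_
    rw [Polynomial.coeff_derivative, abs_mul]
    have h1 : |((i : ℝ) + 1)| = (i : ℝ) + 1 := abs_of_nonneg (by positivity)
    rw [h1]
    have h2 : (i : ℝ) + 1 ≤ n := by
      have := Finset.mem_range.1 hi
      exact_mod_cast this
    calc |p.coeff (i + 1)| * ((i : ℝ) + 1) ≤ |p.coeff (i + 1)| * n :=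
          mul_le_mul_of_nonneg_left h2 (abs_nonneg _)
      _ = (n : ℝ) * |p.coeff (i + 1)| := mul_comm _ _
  refine step1.trans ?_
  rw [← Finset.mul_sum]
  refine mul_le_mul_of_nonneg_left ?_ (Nat.cast_nonneg n)
  rw [Finset.sum_range_succ']
  exact le_add_of_nonneg_right (abs_nonneg _)

lemma natDegree_tanhPoly (m : ℕ) : (tanhPoly m).natDegree ≤ m + 1 := by
  induction m with
  | zero => simp [tanhPoly]
  | succ m ih =>
    show ((1 - X ^ 2) * (tanhPoly m).derivative).natDegree ≤ m + 2
    refine (Polynomial.natDegree_mul_le).trans ?_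
    have h1 : (1 - X ^ 2 : Polynomial ℝ).natDegree ≤ 2 := by
      refine (Polynomial.natDegree_sub_le _ _).trans ?_
      simp
    have h2 : ((tanhPoly m).derivative).natDegree ≤ m := by
      refine (Polynomial.natDegree_derivative_le _).trans ?_
      omega
    omega

lemma coeffSum_tanhPoly (m : ℕ) :
    coeffSum (tanhPoly m) (m + 2) ≤ 2 ^ m * m.factorial := by
  induction m with
  | zero =>
    show coeffSum X 2 ≤ 2 ^ 0 * ((Nat.factorial 0 : ℕ) : ℝ)
    unfold coeffSum
    rw [Finset.sum_range_succ, Finset.sum_range_succ]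
    norm_num
  | succ m ih =>
    have hD : ((tanhPoly m).derivative).natDegree ≤ m :=
      (Polynomial.natDegree_derivative_le _).trans (by have := natDegree_tanhPoly m; omega)
    have key : tanhPoly (m + 1) = (tanhPoly m).derivative - X ^ 2 * (tanhPoly m).derivative := by
      show (1 - X ^ 2) * (tanhPoly m).derivative = _
      ring
    have hDsum : coeffSum ((tanhPoly m).derivative) (m + 1)
        ≤ ((m : ℝ) + 1) * coeffSum (tanhPoly m) (m + 2) := by
      have h := coeffSum_derivative (tanhPoly m) (m + 1)
      push_cast at h
      exact h
    have hpad : coeffSum ((tanhPoly m).derivative) (m + 3)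
        = coeffSum ((tanhPoly m).derivative) (m + 1) :=
      coeffSum_pad _ (by omega) (by omega)
    calc coeffSum (tanhPoly (m + 1)) (m + 1 + 2)
        ≤ coeffSum ((tanhPoly m).derivative) (m + 3)
            + coeffSum (X ^ 2 * (tanhPoly m).derivative) (m + 3) := by
          rw [key]; exact coeffSum_sub _ _ _
      _ = coeffSum ((tanhPoly m).derivative) (m + 1)
            + coeffSum ((tanhPoly m).derivative) (m + 1) := by
          rw [hpad]
          congr 1
          exact coeffSum_X_sq_mul _ (m + 1)
      _ ≤ 2 * ((m + 1) * coeffSum (tanhPoly m) (m + 2)) := by linarith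
      _ ≤ 2 * ((m + 1) * (2 ^ m * m.factorial)) := by
          have h := coeffSum_nonneg (tanhPoly m) (m + 2)
          nlinarith [ih]
      _ = 2 ^ (m + 1) * (m + 1).factorial := by
          rw [Nat.factorial_succ]
          push_cast
          ring

lemma one_div_cosh_sq_le₁ (x : ℝ) : 1 / Real.cosh x ^ 2 ≤ 4 * Real.exp (-2 * x) := by
  have hc := Real.cosh_pos x
  have hcosh := Real.cosh_eq x
  have e1 := Real.exp_pos x
  have e2 := Real.exp_pos (-x)
  have hsq : Real.exp (2 * x) = Real.exp x * Real.exp x := by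
    rw [← Real.exp_add]; ring_nf
  have h1 : Real.exp (2 * x) / 4 ≤ Real.cosh x ^ 2 := by nlinarith
  have hmul : Real.exp (-2 * x) * Real.exp (2 * x) = 1 := by
    rw [← Real.exp_add]; norm_num
  rw [div_le_iff₀ (by positivity)]
  nlinarith [Real.exp_pos (-2 * x)]

lemma one_div_cosh_sq_le₂ (x : ℝ) : 1 / Real.cosh x ^ 2 ≤ 4 * Real.exp (2 * x) := by
  have hc := Real.cosh_pos x
  have hcosh := Real.cosh_eq x
  have e1 := Real.exp_pos x
  have e2 := Real.exp_pos (-x)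
  have hsq : Real.exp (-(2 * x)) = Real.exp (-x) * Real.exp (-x) := by
    rw [← Real.exp_add]; ring_nf
  have h1 : Real.exp (-(2 * x)) / 4 ≤ Real.cosh x ^ 2 := by nlinarith
  have hmul : Real.exp (2 * x) * Real.exp (-(2 * x)) = 1 := by
    rw [← Real.exp_add]; norm_num
  rw [div_le_iff₀ (by positivity)]
  nlinarith [Real.exp_pos (2 * x)]

lemma one_sub_tanh_sq_le (x : ℝ) :
    1 - Real.tanh x ^ 2 ≤ 4 * min (Real.exp (-2 * x)) (Real.exp (2 * x)) := by
  have hc := Real.cosh_pos x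
  have htanh : 1 - Real.tanh x ^ 2 = 1 / Real.cosh x ^ 2 := by
    rw [Real.tanh_eq_sinh_div_cosh]
    have hid := Real.cosh_sq_sub_sinh_sq x
    field_simp
    exact hid
  rw [htanh]
  rcases min_cases (Real.exp (-2 * x)) (Real.exp (2 * x)) with ⟨h, _⟩ | ⟨h, _⟩ <;> rw [h]
  · exact one_div_cosh_sq_le₁ x
  · exact one_div_cosh_sq_le₂ x

/-- **Lemma A.4.** For `m ≥ 1` and all `x ∈ ℝ`,
`|tanh^{(m)}(x)| ≤ (2m)^{m+1} · min{exp(-2x), exp(2x)}`. -/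
theorem abs_iteratedDeriv_tanh_le (m : ℕ) (hm : 1 ≤ m) (x : ℝ) :
    |iteratedDeriv m Real.tanh x| ≤
      (2 * (m : ℝ)) ^ (m + 1) * min (Real.exp (-2 * x)) (Real.exp (2 * x)) := by
  obtain ⟨k, rfl⟩ : ∃ k, m = k + 1 := ⟨m - 1, by omega⟩
  have ht : |Real.tanh x| ≤ 1 := by
    have h := Real.cosh_pos x
    rw [Real.tanh_eq_sinh_div_cosh, abs_div, abs_of_pos h, div_le_one h]
    have := Real.cosh_sq_sub_sinh_sq x
    nlinarith [abs_nonneg (Real.sinh x), sq_abs (Real.sinh x), Real.cosh_pos x]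
  have heq : iteratedDeriv (k + 1) Real.tanh x
      = (1 - Real.tanh x ^ 2) * ((tanhPoly k).derivative.eval (Real.tanh x)) := by
    rw [iteratedDeriv_tanh_eq]
    show ((1 - X ^ 2) * (tanhPoly k).derivative).eval (Real.tanh x) = _
    simp [Polynomial.eval_mul]
  have hD : ((tanhPoly k).derivative).natDegree < k + 1 :=
    Nat.lt_succ_of_le ((Polynomial.natDegree_derivative_le _).trans
      (by have := natDegree_tanhPoly k; omega))
  have hbound : |(tanhPoly k).derivative.eval (Real.tanh x)|
      ≤ coeffSum ((tanhPoly k).derivative) (k + 1) := abs_eval_le _ _ hD ht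
  have hcs : coeffSum ((tanhPoly k).derivative) (k + 1)
      ≤ ((k : ℝ) + 1) * (2 ^ k * k.factorial) := by
    have h := coeffSum_derivative (tanhPoly k) (k + 1)
    push_cast at h
    exact h.trans (mul_le_mul_of_nonneg_left (coeffSum_tanhPoly k)
      (by positivity))
  have h1sub : 0 ≤ 1 - Real.tanh x ^ 2 := by
    have := sq_abs (Real.tanh x)
    nlinarith [ht, abs_nonneg (Real.tanh x)]
  have hmin : 1 - Real.tanh x ^ 2 ≤ 4 * min (Real.exp (-2 * x)) (Real.exp (2 * x)) :=
    one_sub_tanh_sq_le x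
  have hminpos : 0 < min (Real.exp (-2 * x)) (Real.exp (2 * x)) :=
    lt_min (Real.exp_pos _) (Real.exp_pos _)
  have hCS0 : 0 ≤ coeffSum ((tanhPoly k).derivative) (k + 1) := coeffSum_nonneg _ _
  rw [heq, abs_mul, abs_of_nonneg h1sub]
  have step : (1 - Real.tanh x ^ 2) * |(tanhPoly k).derivative.eval (Real.tanh x)|
      ≤ (4 * min (Real.exp (-2 * x)) (Real.exp (2 * x)))
        * ((k + 1) * (2 ^ k * k.factorial)) := by
    refine mul_le_mul hmin (hbound.trans hcs) (abs_nonneg _) (by positivity)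
  refine step.trans ?_
  rw [show (4 * min (Real.exp (-2 * x)) (Real.exp (2 * x)))
        * (((k:ℝ) + 1) * (2 ^ k * k.factorial))
      = (4 * (((k:ℝ) + 1) * (2 ^ k * k.factorial)))
        * min (Real.exp (-2 * x)) (Real.exp (2 * x)) by ring]
  refine mul_le_mul_of_nonneg_right ?_ hminpos.le
  -- 4 * (k+1) * 2^k * k! ≤ (2(k+1))^(k+2)
  have hfact : ((k + 1).factorial : ℝ) ≤ ((k : ℝ) + 1) ^ (k + 1) := by
    have := Nat.factorial_le_pow (k + 1)
    calc ((k + 1).factorial : ℝ) ≤ ((k + 1 : ℕ) ^ (k + 1) : ℕ) := by exact_mod_cast this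
      _ = ((k : ℝ) + 1) ^ (k + 1) := by push_cast; ring
  have hexp : (2 * ((k : ℝ) + 1)) ^ (k + 1 + 1)
      = 2 ^ (k + 2) * ((k : ℝ) + 1) ^ (k + 2) := by
    rw [mul_pow]
  push_cast
  calc 4 * (((k : ℝ) + 1) * (2 ^ k * k.factorial))
      = 2 ^ (k + 2) * (((k : ℝ) + 1) * k.factorial) := by ring
    _ = 2 ^ (k + 2) * ((k + 1).factorial : ℝ) := by
        rw [Nat.factorial_succ]; push_cast; ring
    _ ≤ 2 ^ (k + 2) * ((k : ℝ) + 1) ^ (k + 1) := by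
        exact mul_le_mul_of_nonneg_left hfact (by positivity)
    _ ≤ 2 ^ (k + 2) * ((k : ℝ) + 1) ^ (k + 2) := by
        refine mul_le_mul_of_nonneg_left ?_ (by positivity)
        exact pow_le_pow_right₀ (by linarith [Nat.cast_nonneg (α := ℝ) k]) (by omega)
    _ = (2 * ((k : ℝ) + 1)) ^ (k + 1 + 1) := by rw [hexp]
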